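/- Fix a ∈ ℝ, b ∈ ℝᵐ, c ∈ ℝ, p > 0, and a positive definite symmetric matrix Γ ∈ ℝ^{m×m}. Suppose it is not the case that (b = 0 ∧ c ≤ 0 ∧ a < 0). Define φ = 0 if b = 0 and c ≤ 0, and φ = ReLU(-a)/(‖b‖²_Γ + p·ReLU(c)²) otherwise, where ‖b‖²_Γ = bᵀΓb; and define χ = 0 if b = 0 and c ≤ 0, and χ = ReLU(-a)·ReLU(c)/(‖b‖²_Γ + p·c²) otherwise. Then (u*, ω*) = (φ·b, χ) minimizes ½‖u‖²_Γ + ½p·ω² over all (u, ω) ∈ ℝᵐ × ℝ≥0 satisfying a + bᵀΓu + c·p·ω ≥ 0. -/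

import Mathlib

open Matrix

/-- Closed-form solution of the optimal-decay CBF quadratic program (Lemma 4). -/
theorem stmt3 {m : ℕ} (a : ℝ) (b : Fin m → ℝ) (c p : ℝ) (hp : 0 < p)
    (Γ : Matrix (Fin m) (Fin m) ℝ) (hΓ : Γ.PosDef)
    (hne : ¬(b = 0 ∧ c ≤ 0 ∧ a < 0))
    (φ χ : ℝ)
    (hφ : φ = if b = 0 ∧ c ≤ 0 then 0 else
      max 0 (-a) / (b ⬝ᵥ Γ *ᵥ b + p * (max 0 c) ^ 2))
    (hχ : χ = if b = 0 ∧ c ≤ 0 then 0 else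
      max 0 (-a) * max 0 c / (b ⬝ᵥ Γ *ᵥ b + p * c ^ 2)) :
    (0 ≤ χ ∧ 0 ≤ a + b ⬝ᵥ Γ *ᵥ (φ • b) + c * p * χ) ∧
      ∀ u : Fin m → ℝ, ∀ ω : ℝ, 0 ≤ ω → 0 ≤ a + b ⬝ᵥ Γ *ᵥ u + c * p * ω →
        (1 / 2) * ((φ • b) ⬝ᵥ Γ *ᵥ (φ • b)) + (1 / 2) * p * χ ^ 2 ≤
          (1 / 2) * (u ⬝ᵥ Γ *ᵥ u) + (1 / 2) * p * ω ^ 2 := by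
  have hsymm : ∀ u v : Fin m → ℝ, u ⬝ᵥ Γ *ᵥ v = v ⬝ᵥ Γ *ᵥ u := by
    intro u v
    have ht : Γᵀ = Γ := by
      have := hΓ.isHermitian.eq
      simpa [Matrix.conjTranspose_eq_transpose_of_trivial] using this
    rw [Matrix.dotProduct_mulVec, ← Matrix.mulVec_transpose, ht, dotProduct_comm]
  have hpsd : ∀ u : Fin m → ℝ, 0 ≤ u ⬝ᵥ Γ *ᵥ u := by
    intro u
    simpa using hΓ.posSemidef.dotProduct_mulVec_nonneg u
  have hq0 : 0 ≤ b ⬝ᵥ Γ *ᵥ b := hpsd b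
  -- helper for the trivial (φ = 0, χ = 0, a ≥ 0) situation
  have heasy : φ = 0 → χ = 0 → 0 ≤ a →
      (0 ≤ χ ∧ 0 ≤ a + b ⬝ᵥ Γ *ᵥ (φ • b) + c * p * χ) ∧
      ∀ u : Fin m → ℝ, ∀ ω : ℝ, 0 ≤ ω → 0 ≤ a + b ⬝ᵥ Γ *ᵥ u + c * p * ω →
        (1 / 2) * ((φ • b) ⬝ᵥ Γ *ᵥ (φ • b)) + (1 / 2) * p * χ ^ 2 ≤
          (1 / 2) * (u ⬝ᵥ Γ *ᵥ u) + (1 / 2) * p * ω ^ 2 := by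
    intro h1 h2 h3
    subst h1; subst h2
    refine ⟨⟨le_refl 0, by simpa using h3⟩, ?_⟩
    intro u ω hω _
    have := hpsd u
    simp only [zero_smul, Matrix.mulVec_zero, dotProduct_zero, zero_dotProduct,
      zero_dotProduct]
    nlinarith [sq_nonneg ω]
  by_cases hbc : b = 0 ∧ c ≤ 0
  · push_neg at hne
    rw [if_pos hbc] at hφ hχ
    exact heasy hφ hχ (hne hbc.1 hbc.2)
  · rw [if_neg hbc] at hφ hχ
    by_cases ha : 0 ≤ a
    · have hmax : max 0 (-a) = 0 := max_eq_left (by linarith)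
      rw [hmax] at hφ hχ
      simp only [zero_div, zero_mul] at hφ hχ
      exact heasy hφ hχ ha
    · push_neg at ha
      have hmax : max 0 (-a) = -a := max_eq_right (by linarith)
      rw [hmax] at hφ hχ
      have hcle : c ≤ max 0 c := le_max_right 0 c
      have hcplus0 : (0:ℝ) ≤ max 0 c := le_max_left 0 c
      have hQ : 0 < b ⬝ᵥ Γ *ᵥ b + p * (max 0 c) ^ 2 := by
        by_cases hb : b = 0
        · have hc : 0 < c := by
            by_contra h
            exact hbc ⟨hb, by linarith⟩
          have h1 : max 0 c = c := max_eq_right hc.le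
          rw [h1]
          nlinarith [mul_pos hp (pow_pos hc 2)]
        · have : 0 < b ⬝ᵥ Γ *ᵥ b := by simpa using hΓ.dotProduct_mulVec_pos hb
          nlinarith [mul_nonneg hp.le (sq_nonneg (max 0 c))]
      have hχ' : χ = -a * max 0 c / (b ⬝ᵥ Γ *ᵥ b + p * (max 0 c) ^ 2) := by
        rcases le_or_gt c 0 with hc | hc
        · have h1 : max 0 c = 0 := max_eq_left hc
          rw [hχ, h1]; simp
        · have h1 : max 0 c = c := max_eq_right hc.le
          rw [hχ, h1]
      have hχpos : 0 ≤ χ := by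
        rw [hχ']
        exact div_nonneg (mul_nonneg (by linarith) hcplus0) hQ.le
      have hcχ : c * p * χ = p * (max 0 c) ^ 2 * (-a) / (b ⬝ᵥ Γ *ᵥ b + p * (max 0 c) ^ 2) := by
        rcases le_or_gt c 0 with hc | hc
        · have h1 : max 0 c = 0 := max_eq_left hc
          rw [hχ', h1]; simp
        · have h1 : max 0 c = c := max_eq_right hc.le
          rw [hχ', h1]
          ring
      have hbφ : b ⬝ᵥ Γ *ᵥ (φ • b) = φ * (b ⬝ᵥ Γ *ᵥ b) := by
        simp [Matrix.mulVec_smul, dotProduct_smul, smul_eq_mul]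
      have hconstr : a + b ⬝ᵥ Γ *ᵥ (φ • b) + c * p * χ = 0 := by
        rw [hbφ, hcχ, hφ]
        field_simp
        ring
      refine ⟨⟨hχpos, by rw [hconstr]⟩, ?_⟩
      intro u ω hω hfeas
      have hU0 : 0 ≤ u ⬝ᵥ Γ *ᵥ u := hpsd u
      obtain ⟨s, hsdef⟩ : ∃ s : ℝ, s = b ⬝ᵥ Γ *ᵥ u + p * (max 0 c) * ω := ⟨_, rfl⟩
      obtain ⟨Q, hQdef⟩ : ∃ Q : ℝ, Q = b ⬝ᵥ Γ *ᵥ b + p * (max 0 c) ^ 2 := ⟨_, rfl⟩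
      have hQpos : 0 < Q := hQdef ▸ hQ
      -- Cauchy–Schwarz for the combined quadratic form
      have h0 : 0 ≤ (s • b - Q • u) ⬝ᵥ Γ *ᵥ (s • b - Q • u) := hpsd _
      have hexp : (s • b - Q • u) ⬝ᵥ Γ *ᵥ (s • b - Q • u)
          = s ^ 2 * (b ⬝ᵥ Γ *ᵥ b) - 2 * s * Q * (b ⬝ᵥ Γ *ᵥ u) + Q ^ 2 * (u ⬝ᵥ Γ *ᵥ u) := by
        simp [Matrix.mulVec_sub, Matrix.mulVec_smul, dotProduct_sub, sub_dotProduct,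
          dotProduct_smul, smul_dotProduct, hsymm u b, smul_eq_mul]
        ring
      rw [hexp] at h0
      have hiden : Q * (Q * (u ⬝ᵥ Γ *ᵥ u + p * ω ^ 2) - s ^ 2)
          = (s ^ 2 * (b ⬝ᵥ Γ *ᵥ b) - 2 * s * Q * (b ⬝ᵥ Γ *ᵥ u) + Q ^ 2 * (u ⬝ᵥ Γ *ᵥ u))
            + p * (s * max 0 c - Q * ω) ^ 2 := by
        rw [hsdef, hQdef]; ring
      have hkey : s ^ 2 ≤ Q * (u ⬝ᵥ Γ *ᵥ u + p * ω ^ 2) := by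
        nlinarith [h0, mul_nonneg hp.le (sq_nonneg (s * max 0 c - Q * ω)), hQpos, hiden]
      -- feasibility gives s ≥ -a
      have hs : -a ≤ s := by
        have h1 : c * p * ω ≤ (max 0 c) * p * ω :=
          mul_le_mul_of_nonneg_right (mul_le_mul_of_nonneg_right hcle hp.le) hω
        rw [hsdef]; linarith only [hfeas, h1]
      have hs2 : a ^ 2 ≤ s ^ 2 :=
        sq_le_sq' (by linarith only [hs]) (by linarith only [hs, ha])
      have hobj : (1 / 2) * ((φ • b) ⬝ᵥ Γ *ᵥ (φ • b)) + (1 / 2) * p * χ ^ 2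
          = a ^ 2 / (2 * Q) := by
        have h1 : (φ • b) ⬝ᵥ Γ *ᵥ (φ • b) = φ ^ 2 * (b ⬝ᵥ Γ *ᵥ b) := by
          simp [Matrix.mulVec_smul, dotProduct_smul, smul_dotProduct, smul_eq_mul]
          ring
        rw [h1, hφ, hχ', hQdef]
        field_simp
      rw [hobj, div_le_iff₀ (by linarith : (0:ℝ) < 2 * Q)]
      linarith only [hkey, hs2]
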